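/- Let C be a small category with finite limits and let L be the full subcategory of C ⥤ Type on the left exact presheaves. For every object c of C, the hom functor L(C(c,-), -) : L ⥤ Type (i.e. the functor sending F to the set of natural transformations from the representable C(c,-) to F) preserves filtered colimits. -/

import Mathlib

open CategoryTheory CategoryTheory.Limits Opposite

/-- The category of left exact presheaves on `C`. -/
abbrev LexPSh (C : Type) [SmallCategory C] : Type 1 :=
  ObjectProperty.FullSubcategory (fun F : C ⥤ Type => PreservesFiniteLimits F)

/-- The representable presheaf `C(c, -)` as an object of `LexPSh C`. -/
def lexRepr (C : Type) [SmallCategory C] (c : C) : LexPSh C :=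
  ⟨coyoneda.obj (op c), inferInstance⟩

section Aux

variable (C : Type) [SmallCategory C] (I : Type) [SmallCategory I] [IsFiltered I]

/-- Left exactness is closed under filtered colimits in `C ⥤ Type`. -/
lemma lex_closedUnderColimits :
    ObjectProperty.IsClosedUnderColimitsOfShape (fun F : C ⥤ Type => PreservesFiniteLimits F) I := by
  have : ObjectProperty.IsClosedUnderIsomorphisms (fun F : C ⥤ Type => PreservesFiniteLimits F) := by
    constructor
    intro F G e hF
    exact preservesFiniteLimits_of_natIso e
  suffices key : ∀ (F : I ⥤ C ⥤ Type) [HasColimit F], (∀ j, PreservesFiniteLimits (F.obj j)) →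
      PreservesFiniteLimits (colimit F) by
    refine ⟨fun X ⟨h⟩ => ?_⟩
    exact ObjectProperty.prop_of_iso _
      (h.isColimit.coconePointUniqueUpToIso (colimit.isColimit _)).symm (key _ h.prop_diag_obj)
  intro F _ hF
  have h1 : PreservesFiniteLimits F.flip := by
    apply preservesFiniteLimits_of_evaluation
    intro i
    exact preservesFiniteLimits_of_natIso (flipCompEvaluation F i).symm
  have h2 : PreservesFiniteLimits (colim : (I ⥤ Type) ⥤ Type) := inferInstance
  have h3 : PreservesFiniteLimits (F.flip ⋙ colim) := comp_preservesFiniteLimits _ _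
  exact preservesFiniteLimits_of_natIso (colimitIsoFlipCompColim F).symm

end Aux

/-- Proposition 1(4): for a representable presheaf `A = C(c,-)`, the hom functor
`L(A, -) : L ⥤ Type` preserves filtered colimits. -/
theorem lex_hom_from_representable_preserves_filtered_colimits
    (C : Type) [SmallCategory C] [HasFiniteLimits C] (c : C)
    (I : Type) [SmallCategory I] [IsFiltered I] :
    PreservesColimitsOfShape I (coyoneda.obj (op (lexRepr C c)) : LexPSh C ⥤ Type) := by
  set P := fun F : C ⥤ Type => PreservesFiniteLimits F
  have hclosed := lex_closedUnderColimits C I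
  have hcreates : CreatesColimitsOfShape I (ObjectProperty.ι P) :=
    ⟨fun {F} => createsColimitFullSubcategoryInclusionOfClosed I P F⟩
  have hhas : HasColimitsOfShape I (LexPSh C) :=
    hasColimitsOfShape_of_hasColimitsOfShape_createsColimitsOfShape
      (ObjectProperty.ι P)
  have hpres : PreservesColimitsOfShape I (ObjectProperty.ι P) := inferInstance
  have hcomp : PreservesColimitsOfShape I
      (ObjectProperty.ι P ⋙ (evaluation C Type).obj c) :=
    comp_preservesColimitsOfShape _ _
  have e : (ObjectProperty.ι P ⋙ (evaluation C Type).obj c)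
      ≅ (coyoneda.obj (op (lexRepr C c)) : LexPSh C ⥤ Type) := by
    refine NatIso.ofComponents (fun F => (Equiv.toIso ((coyonedaEquiv (F := F.obj)).symm.trans
      ((ObjectProperty.fullyFaithfulι P).homEquiv (X := lexRepr C c) (Y := F)).symm))) ?_
    intro F G f
    refine ConcreteCategory.hom_ext _ _ (fun x => ?_)
    apply ObjectProperty.hom_ext
    change (coyonedaEquiv (F := G.obj)).symm (f.hom.app c x) = (coyonedaEquiv (F := F.obj)).symm x ≫ f.hom
    rw [Equiv.symm_apply_eq, coyonedaEquiv_comp, Equiv.apply_symm_apply]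
  exact preservesColimitsOfShape_of_natIso e
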